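/- Let p* be a maximum entropy distribution on finite Ω subject to linear moment constraints, and suppose p*(ω₀) = 0 for some ω₀ ∈ Ω. Then every distribution p satisfying the same constraints also has p(ω₀) = 0. -/
import Mathlib


open Finset

noncomputable section

def IsDist {Ω : Type*} [Fintype Ω] (p : Ω → ℝ) : Prop :=
  (∀ ω, 0 ≤ p ω) ∧ ∑ ω, p ω = 1

def entropy {Ω : Type*} [Fintype Ω] (p : Ω → ℝ) : ℝ :=
  -∑ ω, p ω * Real.log (p ω)

lemma entropy_eq {Ω : Type*} [Fintype Ω] (p : Ω → ℝ) :
    entropy p = ∑ ω, Real.negMulLog (p ω) := by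
  simp [entropy, Real.negMulLog, ← Finset.sum_neg_distrib]

/-- Csiszár's support lemma: if the maximum entropy distribution `pstar` on a
finite space subject to linear moment constraints (with indicator constraint functions)
vanishes at some point `ω₀`, then every distribution satisfying the same constraints also
vanishes at `ω₀`. -/
theorem maxEnt_support_maximal
    {Ω ι : Type*} [Fintype Ω] [Fintype ι]
    (f : ι → Ω → ℝ) (θ : ι → ℝ)
    (hind : ∀ i ω, f i ω = 0 ∨ f i ω = 1)
    (pstar : Ω → ℝ) (hps : IsDist pstar)
    (hpsc : ∀ i, ∑ ω, pstar ω * f i ω = θ i)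
    (hpsmax : ∀ p : Ω → ℝ, IsDist p → (∀ i, ∑ ω, p ω * f i ω = θ i) →
      entropy p ≤ entropy pstar)
    (ω₀ : Ω) (h0 : pstar ω₀ = 0) :
    ∀ p : Ω → ℝ, IsDist p → (∀ i, ∑ ω, p ω * f i ω = θ i) → p ω₀ = 0 := by
  intro p hp hpc
  classical
  by_contra hne
  have hc : 0 < p ω₀ := lt_of_le_of_ne (hp.1 ω₀) (Ne.symm hne)
  set c : ℝ := p ω₀ with hcdef
  -- choose small t
  set t : ℝ := min (1/2) (Real.exp ((entropy p - entropy pstar - 1) / c)) with htdef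
  have ht0 : 0 < t := lt_min (by norm_num) (Real.exp_pos _)
  have ht1 : t < 1 := lt_of_le_of_lt (min_le_left _ _) (by norm_num)
  have htlog : Real.log t ≤ (entropy p - entropy pstar - 1) / c := by
    calc Real.log t ≤ Real.log (Real.exp ((entropy p - entropy pstar - 1) / c)) :=
          Real.log_le_log ht0 (min_le_right _ _)
      _ = (entropy p - entropy pstar - 1) / c := Real.log_exp _
  have hkey : 0 < entropy p - entropy pstar - c * Real.log t := by
    have h1 := mul_le_mul_of_nonneg_left htlog hc.le
    rw [mul_div_cancel₀ _ hc.ne'] at h1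
    linarith
  -- the mixture
  set q : Ω → ℝ := fun ω => (1 - t) * pstar ω + t * p ω with hqdef
  have hq : IsDist q := by
    constructor
    · intro ω
      have := hps.1 ω; have := hp.1 ω
      have h1t : (0:ℝ) ≤ 1 - t := by linarith
      positivity
    · simp only [hqdef]
      rw [Finset.sum_add_distrib, ← Finset.mul_sum, ← Finset.mul_sum, hps.2, hp.2]
      ring
  have hqc : ∀ i, ∑ ω, q ω * f i ω = θ i := by
    intro i
    simp only [hqdef, add_mul, mul_assoc]
    rw [Finset.sum_add_distrib, ← Finset.mul_sum, ← Finset.mul_sum, hpsc i, hpc i]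
    ring
  have hle := hpsmax q hq hqc
  -- concavity pointwise
  have hconc : ∀ ω, (1 - t) * Real.negMulLog (pstar ω) + t * Real.negMulLog (p ω)
      ≤ Real.negMulLog (q ω) := by
    intro ω
    have := Real.concaveOn_negMulLog.2 (Set.mem_Ici.mpr (hps.1 ω)) (Set.mem_Ici.mpr (hp.1 ω))
      (by linarith : (0:ℝ) ≤ 1 - t) ht0.le (by ring)
    simpa [smul_eq_mul] using this
  -- the extra gain at ω₀
  have hω₀ : Real.negMulLog (q ω₀) =
      (1 - t) * Real.negMulLog (pstar ω₀) + t * Real.negMulLog (p ω₀) + c * Real.negMulLog t := by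
    simp only [hqdef, h0, mul_zero, zero_add, Real.negMulLog_zero]
    rw [Real.negMulLog_mul]
    ring
  have hsum : (1 - t) * entropy pstar + t * entropy p + c * Real.negMulLog t ≤ entropy q := by
    rw [entropy_eq q, entropy_eq pstar, entropy_eq p,
      ← Finset.sum_erase_add _ _ (Finset.mem_univ ω₀),
      ← Finset.sum_erase_add _ _ (Finset.mem_univ ω₀),
      ← Finset.sum_erase_add _ _ (Finset.mem_univ ω₀)]
    have h1 : ∑ ω ∈ Finset.univ.erase ω₀,
        ((1 - t) * Real.negMulLog (pstar ω) + t * Real.negMulLog (p ω))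
        ≤ ∑ ω ∈ Finset.univ.erase ω₀, Real.negMulLog (q ω) :=
      Finset.sum_le_sum (fun ω _ => hconc ω)
    rw [Finset.sum_add_distrib, ← Finset.mul_sum, ← Finset.mul_sum] at h1
    rw [hω₀]
    linarith
  have hpos : 0 < Real.negMulLog t := by
    simp only [Real.negMulLog, neg_mul, neg_pos]
    exact mul_neg_of_pos_of_neg ht0 (Real.log_neg ht0 ht1)
  have hfin : t * (entropy p - entropy pstar) + c * Real.negMulLog t ≤ 0 := by linarith
  have hnml : Real.negMulLog t = -t * Real.log t := rfl
  nlinarith [hkey, ht0]
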